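/- arXiv:1405.3088 — 7 statements merged into one kernel-verified Lean document; each statement's English description precedes it below -/
import Mathlib

section
/- Define p₂ on the kernel of p₁ in 𝓕 by p₂(F)(x,y,z) = η(y)F(φ²x, ξ, φ²z) + η(z)F(φ²x, φ²y, ξ). Then p₂∘p₂ = p₂. -/
/-- On the kernel of p₁ in 𝓕, the operator
p₂(F)(x,y,z) = η(y)F(φ²x,ξ,φ²z) + η(z)F(φ²x,φ²y,ξ) is idempotent. -/
theorem p2_idempotent {V : Type*} [AddCommGroup V] [Module ℝ V]
    (φ : V →ₗ[ℝ] V) (ξ : V) (η : V →ₗ[ℝ] ℝ)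
    (hφξ : φ ξ = 0) (hφ2 : ∀ x, φ (φ x) = -x + η x • ξ)
    (hηφ : ∀ x, η (φ x) = 0) (hηξ : η ξ = 1)
    (F : V → V → V → ℝ)
    (hF1 : ∀ y z, IsLinearMap ℝ (fun x => F x y z))
    (hF2 : ∀ x z, IsLinearMap ℝ (fun y => F x y z))
    (hF3 : ∀ x y, IsLinearMap ℝ (fun z => F x y z))
    (hFsym : ∀ x y z, F x y z = F x z y)
    (hFprop : ∀ x y z, F x y z = F x (φ y) (φ z) + η y * F x ξ z + η z * F x y ξ)
    (hker : ∀ x y z, -(F (φ (φ x)) (φ (φ y)) (φ (φ z))) = 0) :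
    let p₂ : (V → V → V → ℝ) → (V → V → V → ℝ) :=
      fun f x y z => η y * f (φ (φ x)) ξ (φ (φ z)) + η z * f (φ (φ x)) (φ (φ y)) ξ
    ∀ x y z, p₂ (p₂ F) x y z = p₂ F x y z := by
  intro p₂ x y z
  have h4 : ∀ w : V, φ (φ (φ (φ w))) = -(φ (φ w)) := fun w => by
    rw [hφ2 (φ (φ w)), hηφ, zero_smul, add_zero]
  have hN1 : ∀ a b c : V, F (-a) b c = -F a b c := fun a b c => (hF1 b c).map_neg a
  have hN3 : ∀ a b c : V, F a b (-c) = -F a b c := fun a b c => (hF3 a b).map_neg c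
  have hN2 : ∀ a b c : V, F a (-b) c = -F a b c := fun a b c => (hF2 a c).map_neg b
  simp only [p₂, hηξ, hηφ, h4, one_mul, zero_mul, add_zero, zero_add, hN1, hN2, hN3, neg_neg]
end

section
/- Define p₃ on the kernel of p₂ by p₃(F)(x,y,z) = η(x)F(ξ, φ²y, φ²z). Then p₃∘p₃ = p₃. -/
/-- On the kernel of p₂ (inside ker p₁ in 𝓕), the operator
p₃(F)(x,y,z) = η(x)F(ξ,φ²y,φ²z) is idempotent. -/
theorem p3_idempotent {V : Type*} [AddCommGroup V] [Module ℝ V]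
    (φ : V →ₗ[ℝ] V) (ξ : V) (η : V →ₗ[ℝ] ℝ)
    (hφξ : φ ξ = 0) (hφ2 : ∀ x, φ (φ x) = -x + η x • ξ)
    (hηφ : ∀ x, η (φ x) = 0) (hηξ : η ξ = 1)
    (F : V → V → V → ℝ)
    (hF1 : ∀ y z, IsLinearMap ℝ (fun x => F x y z))
    (hF2 : ∀ x z, IsLinearMap ℝ (fun y => F x y z))
    (hF3 : ∀ x y, IsLinearMap ℝ (fun z => F x y z))
    (hFsym : ∀ x y z, F x y z = F x z y)
    (hFprop : ∀ x y z, F x y z = F x (φ y) (φ z) + η y * F x ξ z + η z * F x y ξ)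
    (hker₁ : ∀ x y z, -(F (φ (φ x)) (φ (φ y)) (φ (φ z))) = 0)
    (hker₂ : ∀ x y z,
      η y * F (φ (φ x)) ξ (φ (φ z)) + η z * F (φ (φ x)) (φ (φ y)) ξ = 0) :
    let p₃ : (V → V → V → ℝ) → (V → V → V → ℝ) :=
      fun f x y z => η x * f ξ (φ (φ y)) (φ (φ z))
    ∀ x y z, p₃ (p₃ F) x y z = p₃ F x y z := by
  intro p₃ x y z
  have h4 : ∀ w : V, φ (φ (φ (φ w))) = -(φ (φ w)) := by
    intro w
    rw [hφ2 (φ (φ w)), hφ2 w, map_add, map_neg, map_smul, hηξ]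
    simp [hηφ]
  show η x * (η ξ * F ξ (φ (φ (φ (φ y)))) (φ (φ (φ (φ z))))) = _
  rw [hηξ, one_mul, h4, h4, (hF2 _ _).map_neg, (hF3 _ _).map_neg, neg_neg]
end

section
/- For any structure tensor F ∈ 𝓕 on an almost contact vector space, F decomposes as F = p₁(F) + p₂(F) + p₃(F) + p₄(F), where p₁(F)(x,y,z) = -F(φ²x,φ²y,φ²z), p₂(F)(x,y,z) = η(y)F(φ²x,ξ,φ²z) + η(z)F(φ²x,φ²y,ξ), p₃(F)(x,y,z) = η(x)F(ξ,φ²y,φ²z), and p₄(F)(x,y,z) = -η(x){η(y)F(ξ,ξ,φ²z) + η(z)F(ξ,φ²y,ξ)}. -/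
/-- Every structure tensor F decomposes as F = p₁(F) + p₂(F) + p₃(F) + p₄(F). -/
theorem F_decomposition {V : Type*} [AddCommGroup V] [Module ℝ V]
    (φ : V →ₗ[ℝ] V) (ξ : V) (η : V →ₗ[ℝ] ℝ)
    (hφξ : φ ξ = 0) (hφ2 : ∀ x, φ (φ x) = -x + η x • ξ)
    (hηφ : ∀ x, η (φ x) = 0) (hηξ : η ξ = 1)
    (F : V → V → V → ℝ)
    (hF1 : ∀ y z, IsLinearMap ℝ (fun x => F x y z))
    (hF2 : ∀ x z, IsLinearMap ℝ (fun y => F x y z))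
    (hF3 : ∀ x y, IsLinearMap ℝ (fun z => F x y z))
    (hFsym : ∀ x y z, F x y z = F x z y)
    (hFprop : ∀ x y z, F x y z = F x (φ y) (φ z) + η y * F x ξ z + η z * F x y ξ) :
    ∀ x y z, F x y z =
      (-(F (φ (φ x)) (φ (φ y)) (φ (φ z))))
      + (η y * F (φ (φ x)) ξ (φ (φ z)) + η z * F (φ (φ x)) (φ (φ y)) ξ)
      + (η x * F ξ (φ (φ y)) (φ (φ z)))
      + (-(η x * (η y * F ξ ξ (φ (φ z)) + η z * F ξ (φ (φ y)) ξ))) := by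

  have add1 : ∀ (u v y z : V), F (u + v) y z = F u y z + F v y z :=
    fun u v y z => (hF1 y z).map_add u v
  have smul1 : ∀ (r : ℝ) (u y z : V), F (r • u) y z = r * F u y z :=
    fun r u y z => (hF1 y z).map_smul r u
  have neg1 : ∀ (u y z : V), F (-u) y z = -F u y z :=
    fun u y z => (hF1 y z).map_neg u
  have add2 : ∀ (x u v z : V), F x (u + v) z = F x u z + F x v z :=
    fun x u v z => (hF2 x z).map_add u v
  have smul2 : ∀ (r : ℝ) (x u z : V), F x (r • u) z = r * F x u z :=
    fun r x u z => (hF2 x z).map_smul r u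
  have neg2 : ∀ (x u z : V), F x (-u) z = -F x u z :=
    fun x u z => (hF2 x z).map_neg u
  have add3 : ∀ (x y u v : V), F x y (u + v) = F x y u + F x y v :=
    fun x y u v => (hF3 x y).map_add u v
  have smul3 : ∀ (r : ℝ) (x y u : V), F x y (r • u) = r * F x y u :=
    fun r x y u => (hF3 x y).map_smul r u
  have neg3 : ∀ (x y u : V), F x y (-u) = -F x y u :=
    fun x y u => (hF3 x y).map_neg u
  have zero3 : ∀ (x y : V), F x y 0 = 0 := fun x y => (hF3 x y).map_zero
  have key : ∀ x : V, F x ξ ξ = 0 := by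
    intro x
    have h := hFprop x ξ ξ
    rw [hφξ, zero3, hηξ] at h
    linarith
  intro x y z
  simp only [hφ2, add1, smul1, neg1, add2, smul2, neg2, add3, smul3, neg3]
  linear_combination (η y * η z) * key x
end

section
/- Let F be a structure tensor in W₂, i.e. F(x,y,z) = η(y)F(φ²x,ξ,φ²z) + η(z)F(φ²x,φ²y,ξ). Define L₁(F)(x,y,z) = F(φx,φy,ξ)η(z) + F(φx,φz,ξ)η(y). Then L₁ maps W₂ to W₂ and L₁∘L₁ = id on W₂. -/
/-- L₁(F)(x,y,z) = F(φx,φy,ξ)η(z) + F(φx,φz,ξ)η(y) maps W₂ to W₂ and is an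
involution on W₂. -/
theorem L1_involution {V : Type*} [AddCommGroup V] [Module ℝ V]
    (φ : V →ₗ[ℝ] V) (ξ : V) (η : V →ₗ[ℝ] ℝ)
    (hφξ : φ ξ = 0) (hφ2 : ∀ x, φ (φ x) = -x + η x • ξ)
    (hηφ : ∀ x, η (φ x) = 0) (hηξ : η ξ = 1)
    (F : V → V → V → ℝ)
    (hF1 : ∀ y z, IsLinearMap ℝ (fun x => F x y z))
    (hF2 : ∀ x z, IsLinearMap ℝ (fun y => F x y z))
    (hF3 : ∀ x y, IsLinearMap ℝ (fun z => F x y z))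
    (hFsym : ∀ x y z, F x y z = F x z y)
    (hFprop : ∀ x y z, F x y z = F x (φ y) (φ z) + η y * F x ξ z + η z * F x y ξ)
    (hW2 : ∀ x y z, F x y z
      = η y * F (φ (φ x)) ξ (φ (φ z)) + η z * F (φ (φ x)) (φ (φ y)) ξ) :
    let L₁ : (V → V → V → ℝ) → (V → V → V → ℝ) :=
      fun f x y z => f (φ x) (φ y) ξ * η z + f (φ x) (φ z) ξ * η y
    (∀ y z, IsLinearMap ℝ (fun x => L₁ F x y z)) ∧
    (∀ x z, IsLinearMap ℝ (fun y => L₁ F x y z)) ∧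
    (∀ x y, IsLinearMap ℝ (fun z => L₁ F x y z)) ∧
    (∀ x y z, L₁ F x y z = L₁ F x z y) ∧
    (∀ x y z, L₁ F x y z
      = L₁ F x (φ y) (φ z) + η y * L₁ F x ξ z + η z * L₁ F x y ξ) ∧
    (∀ x y z, L₁ F x y z
      = η y * L₁ F (φ (φ x)) ξ (φ (φ z)) + η z * L₁ F (φ (φ x)) (φ (φ y)) ξ) ∧
    (∀ x y z, L₁ (L₁ F) x y z = F x y z) := by
  intro L₁
  have hz0 : ∀ x, F (φ x) 0 ξ = 0 := fun x => (hF2 (φ x) ξ).map_zero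
  have hηφ2 : ∀ x, η (φ (φ x)) = 0 := by
    intro x; rw [hφ2]; simp [hηξ]
  have hφ3 : ∀ x, φ (φ (φ x)) = -(φ x) := by
    intro x; rw [hφ2 (φ x), hηφ]; simp
  have hF3neg : ∀ x y, F (-(φ x)) (-(φ y)) ξ = F (φ x) (φ y) ξ := by
    intro x y
    rw [(hF1 _ _).map_neg, (hF2 _ _).map_neg, neg_neg]
  refine ⟨?_, ?_, ?_, ?_, ?_, ?_, ?_⟩
  · intro y z
    constructor
    · intro a b
      simp only [L₁, map_add, (hF1 (φ y) ξ).map_add, (hF1 (φ z) ξ).map_add]; ring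
    · intro c a
      simp only [L₁, map_smul, (hF1 (φ y) ξ).map_smul, (hF1 (φ z) ξ).map_smul,
        smul_eq_mul]; ring
  · intro x z
    constructor
    · intro a b
      simp only [L₁, map_add, (hF2 (φ x) ξ).map_add]; ring
    · intro c a
      simp only [L₁, map_smul, (hF2 (φ x) ξ).map_smul, smul_eq_mul]; ring
  · intro x y
    constructor
    · intro a b
      simp only [L₁, map_add, (hF2 (φ x) ξ).map_add]; ring
    · intro c a
      simp only [L₁, map_smul, (hF2 (φ x) ξ).map_smul, smul_eq_mul]; ring
  · intro x y z; simp only [L₁]; ring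
  · intro x y z
    simp only [L₁, hφξ, hηφ, hz0, hηξ]; ring
  · intro x y z
    simp only [L₁, hφξ, hz0, hηφ2, hηξ, hφ3, hF3neg]; ring
  · intro x y z
    simp only [L₁, hφξ, hz0, hηφ, hηξ]
    rw [hW2 x y z, hFsym (φ (φ x)) ξ (φ (φ z))]; ring
end

section
/- Let F be a structure tensor in W₂ and define L₂(F)(x,y,z) = F(φ²y,φ²x,ξ)η(z) + F(φ²z,φ²x,ξ)η(y). Then L₂ maps W₂ to W₂, L₂∘L₂ = id on W₂, and L₁∘L₂ = L₂∘L₁ where L₁(F)(x,y,z) = F(φx,φy,ξ)η(z) + F(φx,φz,ξ)η(y). -/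
/-- L₂(F)(x,y,z) = F(φ²y,φ²x,ξ)η(z) + F(φ²z,φ²x,ξ)η(y) maps W₂ to W₂, is an
involution on W₂, and commutes with L₁. -/
theorem L2_involution_commutes {V : Type*} [AddCommGroup V] [Module ℝ V]
    (φ : V →ₗ[ℝ] V) (ξ : V) (η : V →ₗ[ℝ] ℝ)
    (hφξ : φ ξ = 0) (hφ2 : ∀ x, φ (φ x) = -x + η x • ξ)
    (hηφ : ∀ x, η (φ x) = 0) (hηξ : η ξ = 1)
    (F : V → V → V → ℝ)
    (hF1 : ∀ y z, IsLinearMap ℝ (fun x => F x y z))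
    (hF2 : ∀ x z, IsLinearMap ℝ (fun y => F x y z))
    (hF3 : ∀ x y, IsLinearMap ℝ (fun z => F x y z))
    (hFsym : ∀ x y z, F x y z = F x z y)
    (hFprop : ∀ x y z, F x y z = F x (φ y) (φ z) + η y * F x ξ z + η z * F x y ξ)
    (hW2 : ∀ x y z, F x y z
      = η y * F (φ (φ x)) ξ (φ (φ z)) + η z * F (φ (φ x)) (φ (φ y)) ξ) :
    let L₁ : (V → V → V → ℝ) → (V → V → V → ℝ) :=
      fun f x y z => f (φ x) (φ y) ξ * η z + f (φ x) (φ z) ξ * η y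
    let L₂ : (V → V → V → ℝ) → (V → V → V → ℝ) :=
      fun f x y z => f (φ (φ y)) (φ (φ x)) ξ * η z + f (φ (φ z)) (φ (φ x)) ξ * η y
    (∀ y z, IsLinearMap ℝ (fun x => L₂ F x y z)) ∧
    (∀ x z, IsLinearMap ℝ (fun y => L₂ F x y z)) ∧
    (∀ x y, IsLinearMap ℝ (fun z => L₂ F x y z)) ∧
    (∀ x y z, L₂ F x y z = L₂ F x z y) ∧
    (∀ x y z, L₂ F x y z
      = L₂ F x (φ y) (φ z) + η y * L₂ F x ξ z + η z * L₂ F x y ξ) ∧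
    (∀ x y z, L₂ F x y z
      = η y * L₂ F (φ (φ x)) ξ (φ (φ z)) + η z * L₂ F (φ (φ x)) (φ (φ y)) ξ) ∧
    (∀ x y z, L₂ (L₂ F) x y z = F x y z) ∧
    (∀ x y z, L₁ (L₂ F) x y z = L₂ (L₁ F) x y z) := by
  intro L₁ L₂
  have hφ2ξ : φ (φ ξ) = 0 := by rw [hφξ, map_zero]
  have hηφ2 : ∀ x, η (φ (φ x)) = 0 := fun x => by
    rw [hφ2]; simp [hηξ]
  have hφ3 : ∀ x, φ (φ (φ x)) = -φ x := fun x => by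
    rw [hφ2]; simp [hηφ]
  have hφ4 : ∀ x, φ (φ (φ (φ x))) = -(φ (φ x)) := fun x => by
    rw [hφ2 (φ (φ x)), hηφ2]; simp
  have F0₁ : ∀ b c, F 0 b c = 0 := fun b c => (hF1 b c).map_zero
  have F0₂ : ∀ a c, F a 0 c = 0 := fun a c => (hF2 a c).map_zero
  have Fneg : ∀ a b c, F (-a) (-b) c = F a b c := fun a b c => by
    rw [(hF1 (-b) c).map_neg, (hF2 a c).map_neg, neg_neg]
  have key : ∀ a b, F (φ (φ (φ (φ a)))) (φ (φ (φ (φ b)))) ξ = F (φ (φ a)) (φ (φ b)) ξ :=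
    fun a b => by rw [hφ4, hφ4, Fneg]
  have hW2' : ∀ x y z, F x y z
      = η y * F (φ (φ x)) (φ (φ z)) ξ + η z * F (φ (φ x)) (φ (φ y)) ξ := fun x y z => by
    rw [hW2 x y z, hFsym (φ (φ x)) ξ (φ (φ z))]
  refine ⟨?_, ?_, ?_, ?_, ?_, ?_, ?_, ?_⟩
  · intro y z
    exact ⟨fun a b => by
        simp only [L₂, map_add, (hF2 _ _).map_add]; ring,
      fun c a => by
        simp only [L₂, map_smul, (hF2 _ _).map_smul, smul_eq_mul]; ring⟩
  · intro x z
    exact ⟨fun a b => by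
        simp only [L₂, map_add, (hF1 _ _).map_add]; ring,
      fun c a => by
        simp only [L₂, map_smul, (hF1 _ _).map_smul, smul_eq_mul]; ring⟩
  · intro x y
    exact ⟨fun a b => by
        simp only [L₂, map_add, (hF1 _ _).map_add]; ring,
      fun c a => by
        simp only [L₂, map_smul, (hF1 _ _).map_smul, smul_eq_mul]; ring⟩
  · intro x y z
    simp only [L₂]; ring
  · intro x y z
    simp only [L₂, hηφ, hηξ, hφ2ξ, F0₁]; ring
  · intro x y z
    simp only [L₂, hηφ2, hηξ, hφ2ξ, F0₁, key]; ring
  · intro x y z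
    simp only [L₂, hηφ2, hηξ, hφ2ξ, F0₁, key]
    rw [hW2' x y z]; ring
  · intro x y z
    simp only [L₁, L₂, hηφ, hηφ2, hηξ, hφ2ξ, hφξ, F0₁, F0₂, hφ3, Fneg]; ring
end

section
/- Let (V, φ, ξ, η, g) be a 3-dimensional almost contact B-metric vector space with φ-basis e₀ = ξ, e₁ = e, e₂ = φe where g(e₀,e₀) = g(e₁,e₁) = -g(e₂,e₂) = 1 and off-diagonal entries vanish. If F is a structure tensor satisfying the F₃-conditions F(ξ,y,z) = F(x,ξ,z) = 0 and the cyclic identity F(x,y,z) + F(y,z,x) + F(z,x,y) = 0 for all x,y,z, then F = 0. -/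
/-- On a 3-dimensional almost contact B-metric vector space, the class 𝓕₃ reduces to
F = 0. -/
theorem dim3_F3_zero {V : Type*} [AddCommGroup V] [Module ℝ V]
    (φ : V →ₗ[ℝ] V) (ξ : V) (η : V →ₗ[ℝ] ℝ) (g : V →ₗ[ℝ] V →ₗ[ℝ] ℝ)
    (hφξ : φ ξ = 0) (hφ2 : ∀ x, φ (φ x) = -x + η x • ξ)
    (hηφ : ∀ x, η (φ x) = 0) (hηξ : η ξ = 1)
    (hsym : ∀ x y, g x y = g y x)
    (hcompat : ∀ x y, g (φ x) (φ y) = -(g x y) + η x * η y)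
    (e : V) (b : Module.Basis (Fin 3) ℝ V)
    (hb0 : b 0 = ξ) (hb1 : b 1 = e) (hb2 : b 2 = φ e)
    (hg00 : g ξ ξ = 1) (hg11 : g e e = 1) (hg22 : g (φ e) (φ e) = -1)
    (hg01 : g ξ e = 0) (hg02 : g ξ (φ e) = 0) (hg12 : g e (φ e) = 0)
    (F : V → V → V → ℝ)
    (hF1 : ∀ y z, IsLinearMap ℝ (fun x => F x y z))
    (hF2 : ∀ x z, IsLinearMap ℝ (fun y => F x y z))
    (hF3 : ∀ x y, IsLinearMap ℝ (fun z => F x y z))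
    (hFsym : ∀ x y z, F x y z = F x z y)
    (hFprop : ∀ x y z, F x y z = F x (φ y) (φ z) + η y * F x ξ z + η z * F x y ξ)
    (hF3a : ∀ y z, F ξ y z = 0)
    (hF3b : ∀ x z, F x ξ z = 0)
    (hF3c : ∀ x y z, F x y z + F y z x + F z x y = 0) :
    ∀ x y z, F x y z = 0 := by

  have hz3 : ∀ x y, F x y ξ = 0 := fun x y => by rw [hFsym]; exact hF3b x y
  have hphi : ∀ x y z, F x y z = F x (φ y) (φ z) := by
    intro x y z
    rw [hFprop x y z, hF3b, hz3]; ring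
  have hmix : ∀ x, F x e (φ e) = 0 := by
    intro x
    have h1 : F x e (φ e) = F x (φ e) (φ (φ e)) := hphi x e (φ e)
    rw [hφ2 e] at h1
    have l := hF3 x (φ e)
    have h2 : F x (φ e) (-e + η e • ξ) = -F x (φ e) e + η e * F x (φ e) ξ := by
      rw [l.map_add, l.map_smul]
      have : F x (φ e) (-e) = -F x (φ e) e := by
        have := l.map_smul (-1 : ℝ) e; simpa using this
      rw [this, smul_eq_mul]
    have h3 : F x (φ e) ξ = 0 := by rw [hFsym]; exact hF3b x (φ e)
    have h4 : F x (φ e) e = F x e (φ e) := by rw [hFsym]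
    rw [h2, h3, h4] at h1
    linarith
  have heee : F e e e = 0 := by have := hF3c e e e; linarith
  have hpee : F (φ e) e e = 0 := by
    have h := hF3c e e (φ e)
    have h1 := hmix e
    have h2 : F e (φ e) e = 0 := by rw [hFsym]; exact hmix e
    linarith
  have hepp : F e (φ e) (φ e) = 0 := by rw [← hphi]; exact heee
  have hppp : F (φ e) (φ e) (φ e) = 0 := by rw [← hphi]; exact hpee
  have hvals : ∀ i : Fin 3, b i = ξ ∨ b i = e ∨ b i = φ e := by
    intro i; fin_cases i
    · exact Or.inl hb0
    · exact Or.inr (Or.inl hb1)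
    · exact Or.inr (Or.inr hb2)
  have hbasis : ∀ i j k : Fin 3, F (b i) (b j) (b k) = 0 := by
    intro i j k
    rcases hvals i with h1 | h1 | h1 <;> rcases hvals j with h2 | h2 | h2 <;>
      rcases hvals k with h3 | h3 | h3 <;> rw [h1, h2, h3] <;>
      first
        | exact hF3a _ _
        | exact hF3b _ _
        | exact hz3 _ _
        | exact heee
        | exact hpee
        | exact hepp
        | exact hppp
        | exact hmix _
        | (rw [hFsym]; exact hmix _)
  have key : ∀ (G : V → ℝ), IsLinearMap ℝ G → (∀ i, G (b i) = 0) → ∀ x, G x = 0 := by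
    intro G hG h0 x
    have heq : IsLinearMap.mk' G hG = (0 : V →ₗ[ℝ] ℝ) := b.ext (by simpa using h0)
    simpa using LinearMap.congr_fun heq x
  intro x y z
  refine key (fun x => F x y z) (hF1 y z) (fun i => ?_) x
  refine key (fun y => F (b i) y z) (hF2 (b i) z) (fun j => ?_) y
  refine key (fun z => F (b i) (b j) z) (hF3 (b i) (b j)) (fun k => ?_) z
  exact hbasis i j k
end

section
/- Let (V, φ, ξ, η, g) be a 3-dimensional almost contact B-metric vector space with orthonormal-type φ-basis {ξ, e, φe}. If F is a structure tensor satisfying the 𝓕₇-conditions F(x,y,z) = F(x,y,ξ)η(z) + F(x,z,ξ)η(y) and F(x,y,ξ) = -F(y,x,ξ) = -F(φx,φy,ξ), then F = 0. -/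
/-- On a 3-dimensional almost contact B-metric vector space, the class 𝓕₇ reduces to
F = 0. -/
theorem dim3_F7_zero {V : Type*} [AddCommGroup V] [Module ℝ V]
    (φ : V →ₗ[ℝ] V) (ξ : V) (η : V →ₗ[ℝ] ℝ) (g : V →ₗ[ℝ] V →ₗ[ℝ] ℝ)
    (hφξ : φ ξ = 0) (hφ2 : ∀ x, φ (φ x) = -x + η x • ξ)
    (hηφ : ∀ x, η (φ x) = 0) (hηξ : η ξ = 1)
    (hsym : ∀ x y, g x y = g y x)
    (hcompat : ∀ x y, g (φ x) (φ y) = -(g x y) + η x * η y)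
    (e : V) (b : Module.Basis (Fin 3) ℝ V)
    (hb0 : b 0 = ξ) (hb1 : b 1 = e) (hb2 : b 2 = φ e)
    (hg00 : g ξ ξ = 1) (hg11 : g e e = 1) (hg22 : g (φ e) (φ e) = -1)
    (hg01 : g ξ e = 0) (hg02 : g ξ (φ e) = 0) (hg12 : g e (φ e) = 0)
    (F : V → V → V → ℝ)
    (hF1 : ∀ y z, IsLinearMap ℝ (fun x => F x y z))
    (hF2 : ∀ x z, IsLinearMap ℝ (fun y => F x y z))
    (hF3 : ∀ x y, IsLinearMap ℝ (fun z => F x y z))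
    (hFsym : ∀ x y z, F x y z = F x z y)
    (hFprop : ∀ x y z, F x y z = F x (φ y) (φ z) + η y * F x ξ z + η z * F x y ξ)
    (hF7a : ∀ x y z, F x y z = F x y ξ * η z + F x z ξ * η y)
    (hF7b : ∀ x y, F x y ξ = -(F y x ξ))
    (hF7c : ∀ x y, F x y ξ = -(F (φ x) (φ y) ξ)) :
    ∀ x y z, F x y z = 0 := by
  -- η e = 0
  have hηe : η e = 0 := by
    have h := hcompat e e
    rw [hg11, hg22] at h
    nlinarith
  -- F x ξ ξ = 0
  have hxξ : ∀ x, F x ξ ξ = 0 := by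
    intro x
    have h := hF7a x ξ ξ
    rw [hηξ] at h
    linarith
  have hξx : ∀ x, F ξ x ξ = 0 := by
    intro x
    rw [hF7b, hxξ, neg_zero]
  have hdiag : ∀ x, F x x ξ = 0 := by
    intro x
    have h := hF7b x x
    linarith
  -- F e (φ e) ξ = 0
  have heφe : F e (φ e) ξ = 0 := by
    have h := hF7c e (φ e)
    rw [hφ2 e, hηe, zero_smul, add_zero] at h
    have h2 : F (φ e) (-e) ξ = -(F (φ e) e ξ) := (hF2 (φ e) ξ).mk' _ |>.map_neg e
    rw [h2, neg_neg, hF7b (φ e) e] at h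
    linarith
  have hφee : F (φ e) e ξ = 0 := by
    rw [hF7b, heφe, neg_zero]
  -- all basis pairs vanish
  have hbij : ∀ i j, F (b i) (b j) ξ = 0 := by
    intro i j
    have h2' : (⟨2, by norm_num⟩ : Fin 3) = 2 := rfl
    fin_cases i <;> fin_cases j <;>
      simp only [Fin.zero_eta, Fin.mk_one, h2', hb0, hb1, hb2] <;>
      first
        | exact hξx _
        | exact hxξ _
        | exact hdiag _
        | exact heφe
        | exact hφee
  -- bilinear map
  let B : V →ₗ[ℝ] V →ₗ[ℝ] ℝ := LinearMap.mk₂ ℝ (fun x y => F x y ξ)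
    (fun x x' y => (hF1 y ξ).map_add x x')
    (fun c x y => (hF1 y ξ).map_smul c x)
    (fun x y y' => (hF2 x ξ).map_add y y')
    (fun c x y => (hF2 x ξ).map_smul c y)
  have hB : B = 0 := by
    apply b.ext
    intro i
    apply b.ext
    intro j
    simpa [B] using hbij i j
  have hGz : ∀ x y, F x y ξ = 0 := by
    intro x y
    have : B x y = 0 := by rw [hB]; rfl
    simpa [B] using this
  intro x y z
  rw [hF7a x y z, hGz, hGz]
  ring
end
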